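/- Let f : ℝⁿ → ℝᵐ be differentiable, let X ⊆ ℝⁿ be convex, and let 𝒥 ⊆ ℝᵐˣⁿ be a set of matrices such that Df(x) ∈ 𝒥 for every x ∈ X, where Df(x) denotes the Jacobian matrix of f at x. Then for every x, x' ∈ X, the vector f(x) − f(x') belongs to the set {J(x − x') : J ∈ closure(convexHull(𝒥))}. -/

import Mathlib

open Filter Topology Set Matrix

lemma sepAux (d : ℕ) : ∀ (E : Type) [NormedAddCommGroup E] [NormedSpace ℝ E]
    [FiniteDimensional ℝ E] (K : Set E), Module.finrank ℝ E ≤ d → Convex ℝ K → K.Nonempty →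
    (0:E) ∉ K → ∃ ℓ : E →L[ℝ] ℝ, (∀ b ∈ K, 0 ≤ ℓ b) ∧ ∃ b ∈ K, 0 < ℓ b := by
  induction d with
  | zero =>
    intro E _ _ _ K hrank hK hne h0
    exfalso
    haveI hsub : Subsingleton E := by
      rw [← Module.finrank_zero_iff (R := ℝ)]
      omega
    obtain ⟨b, hb⟩ := hne
    exact h0 (by rwa [Subsingleton.elim (0:E) b])
  | succ d ih =>
    intro E _ _ _ K hrank hK hne h0
    by_cases hcl : (0:E) ∈ closure K
    · -- supporting hyperplane case
      have h0i : (0:E) ∉ interior (closure K) := by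
        intro h0i
        have haff : affineSpan ℝ (closure K) = ⊤ :=
          (hK.closure.interior_nonempty_iff_affineSpan_eq_top).1 ⟨0, h0i⟩
        have hclsub : closure K ⊆ (affineSpan ℝ K : Set E) :=
          closure_minimal (subset_affineSpan ℝ K)
            (affineSpan ℝ K).closed_of_finiteDimensional
        have haffK : affineSpan ℝ K = ⊤ :=
          top_le_iff.1 (haff ▸ affineSpan_le.2 hclsub)
        obtain ⟨z, hz⟩ := (hK.interior_nonempty_iff_affineSpan_eq_top).2 haffK
        obtain ⟨ε, hε, hball⟩ := Metric.isOpen_iff.1 isOpen_interior 0 h0i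
        set c : ℝ := ε / (2 * (‖z‖ + 1)) with hc
        have hcpos : 0 < c := by positivity
        have hkey : c * (‖z‖ + 1) = ε / 2 := by
          rw [hc]; field_simp
        have hw : -(c • z) ∈ closure K := by
          apply interior_subset
          apply hball
          rw [Metric.mem_ball, dist_zero_right, norm_neg, norm_smul,
            Real.norm_eq_abs, abs_of_pos hcpos]
          have hnz : (0:ℝ) ≤ ‖z‖ := norm_nonneg z
          nlinarith
        have hcomb : (0:E) = (c / (1+c)) • z + (1 / (1+c)) • (-(c • z)) := by
          rw [smul_neg, smul_smul, ← sub_eq_add_neg, ← sub_smul]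
          rw [show c / (1+c) - 1 / (1+c) * c = 0 by
            rw [div_mul_eq_mul_div, one_mul, sub_self]]
          rw [zero_smul]
        have : (0:E) ∈ interior K := by
          rw [hcomb]
          refine hK.combo_interior_closure_mem_interior hz hw
            (div_pos hcpos (by linarith)) (le_of_lt (div_pos one_pos (by linarith))) ?_
          rw [← add_div, add_comm c 1, div_self (by linarith : (1:ℝ)+c ≠ 0)]
        exact h0 (interior_subset this)
      have hseq : ∀ k : ℕ, ∃ x : E, x ∉ closure K ∧ ‖x‖ < 1/(k+1) := by
        intro k
        by_contra hcon
        push_neg at hcon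
        apply h0i
        rw [mem_interior_iff_mem_nhds]
        apply Filter.mem_of_superset (Metric.ball_mem_nhds 0 (by positivity : (0:ℝ) < 1/(k+1)))
        intro y hy
        rw [Metric.mem_ball, dist_zero_right] at hy
        by_contra hyn
        exact absurd hy (not_lt.2 (hcon y hyn))
      choose x hx1 hx2 using hseq
      have hsep : ∀ k : ℕ, ∃ f : E →L[ℝ] ℝ, f ≠ 0 ∧ ∀ b ∈ closure K, f (x k) < f b := by
        intro k
        obtain ⟨f, u, hfu, hub⟩ := geometric_hahn_banach_point_closed hK.closure
          isClosed_closure (hx1 k)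
        refine ⟨f, ?_, fun b hb => lt_trans hfu (hub b hb)⟩
        intro hf0
        have h1 := hub 0 hcl
        rw [hf0] at h1 hfu
        simp only [ContinuousLinearMap.zero_apply] at h1 hfu
        linarith
      choose f hf0 hfsep using hsep
      set g : ℕ → E →L[ℝ] ℝ := fun k => ‖f k‖⁻¹ • f k with hg
      have hgnorm : ∀ k, g k ∈ Metric.sphere (0 : E →L[ℝ] ℝ) 1 := by
        intro k
        rw [mem_sphere_zero_iff_norm]
        exact norm_smul_inv_norm (hf0 k)
      have hgsep : ∀ k, ∀ b ∈ closure K, g k (x k) < g k b := by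
        intro k b hb
        have := hfsep k b hb
        simp only [hg, ContinuousLinearMap.smul_apply, smul_eq_mul]
        have hpos : (0:ℝ) < ‖f k‖⁻¹ := by
          rw [inv_pos, norm_pos_iff]; exact hf0 k
        exact mul_lt_mul_of_pos_left this hpos
      obtain ⟨glim, hglim, φ, hφ, hconv⟩ :=
        (isCompact_sphere (0 : E →L[ℝ] ℝ) 1).tendsto_subseq hgnorm
      have hclaim : ∀ b ∈ closure K, 0 ≤ glim b := by
        intro b hb
        have t1 : Tendsto (fun j => g (φ j) b) atTop (𝓝 (glim b)) :=
          ((ContinuousLinearMap.apply ℝ ℝ b).continuous.tendsto glim).comp hconv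
        have t2 : Tendsto (fun j => g (φ j) (x (φ j))) atTop (𝓝 (0:ℝ)) := by
          apply squeeze_zero_norm (a := fun j => 1/((φ j : ℝ)+1))
          · intro j
            calc ‖g (φ j) (x (φ j))‖ ≤ ‖g (φ j)‖ * ‖x (φ j)‖ := (g (φ j)).le_opNorm _
            _ = ‖x (φ j)‖ := by rw [mem_sphere_zero_iff_norm.1 (hgnorm (φ j)), one_mul]
            _ ≤ 1/((φ j : ℝ)+1) := (hx2 (φ j)).le
          · exact tendsto_one_div_add_atTop_nhds_zero_nat.comp hφ.tendsto_atTop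
        exact le_of_tendsto_of_tendsto' t2 t1 (fun j => (hgsep (φ j) b hb).le)
      by_cases hpos : ∃ b ∈ K, 0 < glim b
      · exact ⟨glim, fun b hb => hclaim b (subset_closure hb), hpos⟩
      · push_neg at hpos
        have hker : ∀ b ∈ K, glim b = 0 :=
          fun b hb => le_antisymm (hpos b hb) (hclaim b (subset_closure hb))
        have hglimne : glim ≠ 0 := by
          intro h
          rw [h] at hglim
          simp [mem_sphere_zero_iff_norm] at hglim
        set W : Submodule ℝ E := LinearMap.ker (glim : E →ₗ[ℝ] ℝ) with hW
        have hWlt : W < ⊤ := by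
          rw [lt_top_iff_ne_top]
          intro htop
          apply hglimne
          ext v
          have hv : v ∈ W := htop ▸ Submodule.mem_top
          simpa [hW, LinearMap.mem_ker] using hv
        have hrankW : Module.finrank ℝ W ≤ d := by
          have := Submodule.finrank_lt hWlt.ne
          omega
        set K' : Set W := W.subtype ⁻¹' K with hK'
        have hK'conv : Convex ℝ K' := hK.linear_preimage W.subtype
        obtain ⟨b, hb⟩ := hne
        have hbW : b ∈ W := by simp [hW, LinearMap.mem_ker, hker b hb]
        have hK'ne : K'.Nonempty := ⟨⟨b, hbW⟩, hb⟩
        have hK'0 : (0 : W) ∉ K' := fun h => h0 (by rw [hK', mem_preimage, map_zero] at h; exact h)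
        obtain ⟨ℓ', hℓ'1, b', hb', hℓ'2⟩ := ih W K' hrankW hK'conv hK'ne hK'0
        obtain ⟨ℓ₀, hℓ₀⟩ := LinearMap.exists_extend (ℓ' : W →ₗ[ℝ] ℝ)
        refine ⟨LinearMap.toContinuousLinearMap ℓ₀, ?_, ?_⟩
        · intro cc hc
          have hcW : cc ∈ W := by simp [hW, LinearMap.mem_ker, hker cc hc]
          have heq : ℓ₀ cc = ℓ' ⟨cc, hcW⟩ := by
            conv_lhs => rw [show cc = W.subtype ⟨cc, hcW⟩ from rfl]
            rw [← LinearMap.comp_apply, hℓ₀]; rfl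
          simpa [heq] using hℓ'1 ⟨cc, hcW⟩ hc
        · refine ⟨b', hb', ?_⟩
          have heq : ℓ₀ b' = ℓ' b' := by
            conv_lhs => rw [show (b' : E) = W.subtype b' from rfl]
            rw [← LinearMap.comp_apply, hℓ₀]; rfl
          simpa [heq] using hℓ'2
    · obtain ⟨f, u, hfu, hub⟩ := geometric_hahn_banach_point_closed hK.closure
        isClosed_closure hcl
      rw [map_zero] at hfu
      obtain ⟨b, hb⟩ := hne
      exact ⟨f, fun cc hc => le_of_lt (lt_trans hfu (hub cc (subset_closure hc))),
        b, hb, lt_trans hfu (hub b (subset_closure hb))⟩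

lemma mvZero {E : Type} [NormedAddCommGroup E] [NormedSpace ℝ E] [FiniteDimensional ℝ E]
    (h : ℝ → E) (hdiff : Differentiable ℝ h) (h01 : h 0 = h 1) :
    (0:E) ∈ convexHull ℝ (deriv h '' Icc 0 1) := by
  by_contra h0
  set A := deriv h '' Icc (0:ℝ) 1 with hA
  have hAne : A.Nonempty := ⟨deriv h 0, mem_image_of_mem _ (left_mem_Icc.2 zero_le_one)⟩
  obtain ⟨ℓ, hℓ1, b, hbK, hb2⟩ := sepAux (Module.finrank ℝ E) E (convexHull ℝ A) le_rfl
    (convex_convexHull ℝ A) (hAne.mono (subset_convexHull ℝ A)) h0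
  have hderiv : ∀ t, HasDerivAt (fun s => ℓ (h s)) (ℓ (deriv h t)) t := fun t =>
    ℓ.hasFDerivAt.comp_hasDerivAt t (hdiff t).hasDerivAt
  have hmono : MonotoneOn (fun s => ℓ (h s)) (Icc 0 1) := by
    apply monotoneOn_of_deriv_nonneg (convex_Icc 0 1)
    · exact (ℓ.continuous.comp hdiff.continuous).continuousOn
    · exact fun t _ => ((hderiv t).differentiableAt).differentiableWithinAt
    · intro t ht
      rw [interior_Icc] at ht
      rw [(hderiv t).deriv]
      exact hℓ1 _ (subset_convexHull ℝ A (mem_image_of_mem _ (Ioo_subset_Icc_self ht)))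
  have hconst : ∀ t ∈ Icc (0:ℝ) 1, ℓ (h t) = ℓ (h 0) := by
    intro t ht
    apply le_antisymm
    · have h1 := hmono ht (right_mem_Icc.2 zero_le_one) ht.2
      calc ℓ (h t) ≤ ℓ (h 1) := h1
      _ = ℓ (h 0) := by rw [← h01]
    · exact hmono (left_mem_Icc.2 zero_le_one) ht ht.1
  have hzero : ∀ t ∈ Icc (0:ℝ) 1, ℓ (deriv h t) = 0 := by
    intro t ht
    have hU := uniqueDiffOn_Icc zero_lt_one t ht
    have H1 : HasDerivWithinAt (fun s => ℓ (h s)) (ℓ (deriv h t)) (Icc 0 1) t :=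
      (hderiv t).hasDerivWithinAt
    have H2 : HasDerivWithinAt (fun s => ℓ (h s)) 0 (Icc 0 1) t :=
      (hasDerivWithinAt_const t _ (ℓ (h 0))).congr (fun s hs => hconst s hs) (hconst t ht)
    exact (H1.derivWithin hU).symm.trans (H2.derivWithin hU)
  have hsub : convexHull ℝ A ⊆ {w : E | ℓ w ≤ 0} := by
    apply convexHull_min
    · rintro w ⟨t, ht, rfl⟩
      exact le_of_eq (hzero t ht)
    · exact convex_halfSpace_le ⟨map_add ℓ, map_smul ℓ⟩ 0
  exact (not_le.2 hb2) (hsub hbK)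

/-- The Jacobian matrix of `f : ℝⁿ → ℝᵐ` at `x`: `(Df(x))_{ij} = ∂f_i/∂x_j(x)`. -/
noncomputable def jacMatrix {n m : ℕ} (f : (Fin n → ℝ) → (Fin m → ℝ)) (x : Fin n → ℝ) :
    Matrix (Fin m) (Fin n) ℝ :=
  fun i j => fderiv ℝ f x (Pi.single j 1) i

lemma jac_mulVec {n m : ℕ} (f : (Fin n → ℝ) → (Fin m → ℝ)) (z v : Fin n → ℝ) :
    (jacMatrix f z).mulVec v = fderiv ℝ f z v := by
  have hv : v = ∑ j, v j • (Pi.single j 1 : Fin n → ℝ) := by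
    funext k
    simp [Finset.sum_apply, Pi.single_apply]
  funext i
  calc (jacMatrix f z).mulVec v i = ∑ j, v j * fderiv ℝ f z (Pi.single j 1) i := by
        simp [jacMatrix, Matrix.mulVec, dotProduct, mul_comm]
  _ = (fderiv ℝ f z (∑ j, v j • (Pi.single j 1 : Fin n → ℝ))) i := by
        rw [map_sum]
        simp [Finset.sum_apply]
  _ = fderiv ℝ f z v i := by rw [← hv]

theorem stmt2 {n m : ℕ} (f : (Fin n → ℝ) → (Fin m → ℝ)) (hf : Differentiable ℝ f)
    (X : Set (Fin n → ℝ)) (hX : Convex ℝ X)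
    (𝒥 : Set (Matrix (Fin m) (Fin n) ℝ))
    (h𝒥 : ∀ x ∈ X, jacMatrix f x ∈ 𝒥)
    (x x' : Fin n → ℝ) (hx : x ∈ X) (hx' : x' ∈ X) :
    f x - f x' ∈
      (fun J : Matrix (Fin m) (Fin n) ℝ => J.mulVec (x - x')) '' closure (convexHull ℝ 𝒥) := by
  set v : Fin n → ℝ := x - x' with hv
  set γ : ℝ → (Fin n → ℝ) := fun t => x' + t • v with hγ
  have hγd : ∀ t, HasDerivAt γ v t := fun t => by
    have := ((hasDerivAt_id t).smul_const v).const_add x'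
    simp only [one_smul] at this
    exact this
  set y : Fin m → ℝ := f x - f x' with hy
  set h : ℝ → (Fin m → ℝ) := fun t => f (γ t) - t • y with hh
  have hhd : ∀ t, HasDerivAt h (fderiv ℝ f (γ t) v - y) t := by
    intro t
    apply HasDerivAt.sub
    · exact (hf (γ t)).hasFDerivAt.comp_hasDerivAt t (hγd t)
    · simpa using (hasDerivAt_id t).smul_const y
  have hdiffh : Differentiable ℝ h := fun t => (hhd t).differentiableAt
  have h01 : h 0 = h 1 := by
    have e0 : γ 0 = x' := by simp [hγ]
    have e1 : γ 1 = x := by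
      simp only [hγ, one_smul, hv]
      abel
    simp only [hh, e0, e1, zero_smul, one_smul, sub_zero, hy]
    abel
  have hmem := mvZero h hdiffh h01
  have hderivh : ∀ t, deriv h t = (jacMatrix f (γ t)).mulVec v - y := fun t => by
    rw [(hhd t).deriv, jac_mulVec f]
  set T : Matrix (Fin m) (Fin n) ℝ → (Fin m → ℝ) := fun J => J.mulVec v with hT
  have hTlin : IsLinearMap ℝ T :=
    ⟨fun a b => Matrix.add_mulVec a b v, fun c a => Matrix.smul_mulVec c a v⟩
  set C : Set (Fin m → ℝ) := T '' (convexHull ℝ 𝒥) with hC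
  have hCconv : Convex ℝ C := (convex_convexHull ℝ 𝒥).is_linear_image hTlin
  have hsub : deriv h '' Icc 0 1 ⊆ (fun w => w + y) ⁻¹' C := by
    rintro w ⟨t, ht, rfl⟩
    rw [hderivh t]
    simp only [mem_preimage, sub_add_cancel]
    exact ⟨jacMatrix f (γ t), subset_convexHull ℝ 𝒥 (h𝒥 _ (hX.add_smul_sub_mem hx' hx ht)), rfl⟩
  have hconvset : Convex ℝ ((fun w => w + y) ⁻¹' C) := hCconv.translate_preimage_left y
  have h0C : (0 : Fin m → ℝ) ∈ (fun w => w + y) ⁻¹' C := convexHull_min hsub hconvset hmem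
  have hyC : y ∈ C := by simpa using h0C
  obtain ⟨J, hJ, hJy⟩ := hyC
  exact ⟨J, subset_closure hJ, hJy⟩
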